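/- With the construction of the previous proposition for the Liénard system ẋ = y − F(x), ẏ = −x: the top coefficients satisfy B_n(x) ≡ 1, B_{n−1}(x) ≡ 0, B_{n−2}(x) = n x²/2, B_{n−3}(x) = n ∫₀ˣ s F(s) ds, and the derivative along the flow equals Ḃ(x,y) = −F(x) B₀'(x) − x B₁(x). -/

import Mathlib

open intervalIntegral

open Polynomial in

lemma key_coeffs (n : ℕ) (hn : 1 ≤ n) (c r : ℝ) (a b : ℕ → ℝ)
    (ha : ∀ j, n < j → a j = 0) (hb : ∀ j, n < j → b j = 0)
    (h : ∀ y : ℝ, (∑ i ∈ Finset.range (n+1), a i * y ^ i) * (y - c) -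
      (∑ i ∈ Finset.range (n+1), (i : ℝ) * b i * y ^ (i-1)) = r) :
    (∀ k, a k - c * a (k+1) - ((k:ℝ)+2) * b (k+2) = 0) ∧
      (- (c * a 0) - b 1 = r) := by
  set p1 : Polynomial ℝ := ∑ i ∈ Finset.range (n+1), C (a i) * X ^ i with hp1
  set p2 : Polynomial ℝ := ∑ i ∈ Finset.range (n+1), C ((i : ℝ) * b i) * X ^ (i-1) with hp2
  set P : Polynomial ℝ := p1 * (X - C c) - p2 - C r with hP
  have hPeval : ∀ y : ℝ, P.eval y = (0 : Polynomial ℝ).eval y := by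
    intro y
    simp only [hP, hp1, hp2, eval_sub, eval_mul, eval_finset_sum, eval_C, eval_X, eval_pow,
      eval_mul, eval_zero]
    rw [← h y]; ring
  have hP0 : P = 0 := Polynomial.funext hPeval
  have hcoeff : ∀ k, P.coeff k = 0 := by intro k; rw [hP0]; simp
  have hc1 : ∀ j, p1.coeff j = a j := by
    intro j
    rw [hp1, finset_sum_coeff]
    simp only [coeff_C_mul, coeff_X_pow, mul_ite, mul_one, mul_zero, Finset.sum_ite_eq]
    by_cases hj : j ∈ Finset.range (n+1)
    · simp [hj]
    · simp only [hj, if_false]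
      exact (ha j (by simpa using hj)).symm
  have hc2 : ∀ k, 1 ≤ k → p2.coeff k = ((k:ℝ)+1) * b (k+1) := by
    intro k hk
    rw [hp2, finset_sum_coeff]
    have : ∀ i ∈ Finset.range (n+1), (C ((i : ℝ) * b i) * X ^ (i-1)).coeff k =
        if i = k+1 then ((k:ℝ)+1) * b (k+1) else 0 := by
      intro i _
      rw [coeff_C_mul, coeff_X_pow]
      by_cases hik : i = k + 1
      · subst hik; simp only [Nat.add_sub_cancel, if_pos rfl, mul_one]; push_cast; ring
      · have : ¬ (k = i - 1) := by omega
        simp [this, hik]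
    rw [Finset.sum_congr rfl this, Finset.sum_ite_eq']
    by_cases hm : k + 1 ∈ Finset.range (n+1)
    · simp [hm]
    · simp only [hm, if_false]
      rw [hb (k+1) (by simp only [Finset.mem_range] at hm; omega)]; ring
  have hc20 : p2.coeff 0 = b 1 := by
    rw [hp2, finset_sum_coeff]
    have : ∀ i ∈ Finset.range (n+1), (C ((i : ℝ) * b i) * X ^ (i-1)).coeff 0 =
        if i = 1 then b 1 else 0 := by
      intro i _
      rw [coeff_C_mul, coeff_X_pow]
      by_cases hik : i = 1
      · subst hik; simp
      · rcases Nat.eq_zero_or_pos i with h0 | h0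
        · subst h0; simp
        · have : ¬ ((0:ℕ) = i - 1) := by omega
          simp [this, hik]
    rw [Finset.sum_congr rfl this, Finset.sum_ite_eq']
    rw [if_pos (Finset.mem_range.mpr (by omega))]
  constructor
  · intro k
    have := hcoeff (k+1)
    rw [hP] at this
    rw [coeff_sub, coeff_sub, mul_sub, coeff_sub, coeff_mul_X, mul_comm p1 (C c),
      coeff_C_mul, hc1, hc1, hc2 (k+1) (by omega), coeff_C_succ] at this
    push_cast at this ⊢
    linarith [this]
  · have := hcoeff 0
    rw [hP] at this
    rw [coeff_sub, coeff_sub, mul_sub, coeff_sub, mul_comm p1 (C c),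
      coeff_C_mul, hc1, hc20, coeff_C_zero, mul_coeff_zero, coeff_X_zero, mul_zero] at this
    linarith [this]

open Polynomial in
theorem stmt_8 (F : Polynomial ℝ) (n : ℕ) (hn : 3 ≤ n)
    (B : Fin (n + 1) → Polynomial ℝ)
    (hnorm1 : (B ⟨n, Nat.lt_succ_self n⟩).eval 0 = 1)
    (hnorm0 : ∀ i : Fin (n + 1), (i : ℕ) < n → (B i).eval 0 = 0)
    (R : Polynomial ℝ)
    (hflow : ∀ x y : ℝ,
      (∑ i : Fin (n + 1), (B i).derivative.eval x * y ^ (i : ℕ)) * (y - F.eval x) -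
        x * (∑ i : Fin (n + 1), (i : ℕ) * (B i).eval x * y ^ ((i : ℕ) - 1)) =
      R.eval x) :
    (B ⟨n, Nat.lt_succ_self n⟩ = 1) ∧
    (B ⟨n - 1, by omega⟩ = 0) ∧
    (∀ x : ℝ, (B ⟨n - 2, by omega⟩).eval x = n * x ^ 2 / 2) ∧
    (∀ x : ℝ, (B ⟨n - 3, by omega⟩).eval x = n * ∫ s in (0:ℝ)..x, s * F.eval s) ∧
    (∀ x : ℝ, R.eval x = -F.eval x * (B ⟨0, by omega⟩).derivative.eval x -
      x * (B ⟨1, by omega⟩).eval x) := by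
  classical
  set Be : ℕ → Polynomial ℝ := fun j => if h : j < n + 1 then B ⟨j, h⟩ else 0 with hBe
  have hBeq : ∀ (j : ℕ) (h : j < n + 1), Be j = B ⟨j, h⟩ := by
    intro j h; rw [hBe]; exact dif_pos h
  have hBz : ∀ j, n < j → Be j = 0 := by
    intro j h; simp [hBe]; omega
  -- the flow equations via key_coeffs
  have hkey : ∀ x : ℝ,
      (∀ k, (Be k).derivative.eval x - F.eval x * (Be (k+1)).derivative.eval x -
        ((k:ℝ)+2) * (x * (Be (k+2)).eval x) = 0) ∧
      (- (F.eval x * (Be 0).derivative.eval x) - x * (Be 1).eval x = R.eval x) := by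
    intro x
    apply key_coeffs n (by omega) (F.eval x) (R.eval x)
      (fun j => (Be j).derivative.eval x) (fun j => x * (Be j).eval x)
    · intro j hj; rw [hBz j hj]; simp
    · intro j hj; rw [hBz j hj]; simp
    · intro y
      have := hflow x y
      rw [← Fin.sum_univ_eq_sum_range
        (fun j => (Be j).derivative.eval x * y ^ j) (n+1),
        ← Fin.sum_univ_eq_sum_range
        (fun j => (j : ℝ) * (x * (Be j).eval x) * y ^ (j-1)) (n+1)]
      have e1 : ∀ i : Fin (n+1), Be (i : ℕ) = B i := by
        intro i; rw [hBeq _ i.isLt]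
      simp only [e1]
      rw [← this]
      congr 1
      rw [Finset.mul_sum]
      apply Finset.sum_congr rfl
      intro i _
      ring
  have E1 := fun x => (hkey x).1
  have E0 := fun x => (hkey x).2
  -- Step A : B n = 1
  have hAn : Be n = B ⟨n, Nat.lt_succ_self n⟩ := hBeq n (Nat.lt_succ_self n)
  have hdn : (Be n).derivative = 0 := by
    apply Polynomial.funext
    intro x
    have := E1 x n
    rw [hBz (n+1) (by omega), hBz (n+2) (by omega)] at this
    simpa using this
  have hBn : Be n = 1 := by
    have h1 := Polynomial.eq_C_of_natDegree_eq_zero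
      (Polynomial.natDegree_eq_zero_of_derivative_eq_zero hdn)
    have h2 : (Be n).coeff 0 = 1 := by
      have h3 : (Be n).eval 0 = 1 := by rw [hAn]; exact hnorm1
      rwa [← Polynomial.coeff_zero_eq_eval_zero] at h3
    rw [h1, h2, map_one]
  -- Step B : B (n-1) = 0
  have hdn1 : (Be (n-1)).derivative = 0 := by
    apply Polynomial.funext
    intro x
    have h := E1 x (n-1)
    have e1 : n - 1 + 1 = n := by omega
    have e2 : n - 1 + 2 = n + 1 := by omega
    rw [e1, e2, hdn, hBz (n+1) (by omega)] at h
    simpa using h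
  have hBn1 : Be (n-1) = 0 := by
    have h1 := Polynomial.eq_C_of_natDegree_eq_zero
      (Polynomial.natDegree_eq_zero_of_derivative_eq_zero hdn1)
    have h2 : (Be (n-1)).coeff 0 = 0 := by
      have h3 : (Be (n-1)).eval 0 = 0 := by
        rw [hBeq (n-1) (by omega)]
        exact hnorm0 ⟨n-1, by omega⟩ (by simp; omega)
      rwa [← Polynomial.coeff_zero_eq_eval_zero] at h3
    rw [h1, h2, map_zero]
  -- Step C : B (n-2)
  have hdn2 : ∀ x : ℝ, (Be (n-2)).derivative.eval x = n * x := by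
    intro x
    have h := E1 x (n-2)
    have e1 : n - 2 + 1 = n - 1 := by omega
    have e2 : n - 2 + 2 = n := by omega
    rw [e1, e2, hBn1, hBn] at h
    have e3 : ((n-2 : ℕ) : ℝ) = (n : ℝ) - 2 := by
      push_cast [Nat.cast_sub (by omega : 2 ≤ n)]; ring
    rw [e3] at h
    simp at h
    linarith [h]
  have hBn2 : Be (n-2) = Polynomial.C ((n:ℝ)/2) * Polynomial.X^2 := by
    have hd : (Be (n-2) - Polynomial.C ((n:ℝ)/2) * Polynomial.X^2).derivative = 0 := by
      apply Polynomial.funext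
      intro x
      rw [Polynomial.derivative_sub]
      simp [Polynomial.derivative_C_mul, Polynomial.derivative_X_pow, hdn2 x]
      ring
    have h1 := Polynomial.eq_C_of_natDegree_eq_zero
      (Polynomial.natDegree_eq_zero_of_derivative_eq_zero hd)
    have h2 : (Be (n-2) - Polynomial.C ((n:ℝ)/2) * Polynomial.X^2).coeff 0 = 0 := by
      rw [Polynomial.coeff_zero_eq_eval_zero]
      have h3 : (Be (n-2)).eval 0 = 0 := by
        rw [hBeq (n-2) (by omega)]
        exact hnorm0 ⟨n-2, by omega⟩ (by simp; omega)
      simp [h3]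
    rw [h2, map_zero] at h1
    linear_combination (norm := ring_nf) h1
  have goal3 : ∀ x : ℝ, (Be (n-2)).eval x = n * x^2 / 2 := by
    intro x; rw [hBn2]; simp; ring
  -- Step D : B (n-3)
  have hdn3 : ∀ x : ℝ, (Be (n-3)).derivative.eval x = n * (x * F.eval x) := by
    intro x
    have h := E1 x (n-3)
    have e1 : n - 3 + 1 = n - 2 := by omega
    have e2 : n - 3 + 2 = n - 1 := by omega
    rw [e1, e2, hBn1, hdn2 x] at h
    simp at h
    linarith [h]
  have goal4 : ∀ x : ℝ, (Be (n-3)).eval x = n * ∫ s in (0:ℝ)..x, s * F.eval s := by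
    intro x
    have hderiv : deriv (fun s => (Be (n-3)).eval s) =
        fun s => (Be (n-3)).derivative.eval s :=
      funext fun s => Polynomial.deriv _
    have hint := intervalIntegral.integral_deriv_eq_sub
      (f := fun s => (Be (n-3)).eval s) (a := 0) (b := x)
      (fun t _ => (Be (n-3)).differentiableAt)
      (by rw [hderiv]; exact ((Be (n-3)).derivative.continuous_aeval).intervalIntegrable 0 x)
    rw [hderiv] at hint
    have hcongr : (∫ s in (0:ℝ)..x, (Be (n-3)).derivative.eval s) =
        ∫ s in (0:ℝ)..x, (n:ℝ) * (s * F.eval s) := by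
      apply intervalIntegral.integral_congr
      intro s _
      exact hdn3 s
    rw [hcongr, intervalIntegral.integral_const_mul] at hint
    have h0 : (Be (n-3)).eval 0 = 0 := by
      rw [hBeq (n-3) (by omega)]
      exact hnorm0 ⟨n-3, by omega⟩ (by simp; omega)
    simp only [h0, sub_zero] at hint
    linarith [hint]
  refine ⟨by rw [← hAn, hBn], ?_, ?_, ?_, ?_⟩
  · rw [← hBeq (n-1) (by omega), hBn1]
  · intro x; rw [← hBeq (n-2) (by omega)]; exact goal3 x
  · intro x; rw [← hBeq (n-3) (by omega)]; exact goal4 x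
  · intro x
    rw [← E0 x, ← hBeq 0 (by omega), ← hBeq 1 (by omega)]
    ring
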